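/- For a down-set Δ ⊆ 2^[n] with maximal elements 𝓕, the f-polynomial f_Δ(t) = ∑_{σ ∈ Δ} t^{|σ|} satisfies f_Δ(t) = ∑_{∅ ≠ S ⊆ 𝓕} (−1)^{|S|+1} (t+1)^{|⋂S|}, as an identity of polynomials in t. -/

import Mathlib

open Finset

private lemma aux_binexp {α : Type*} [DecidableEq α] (x : ℝ) (A : Finset α) :
    (x + 1) ^ A.card = ∑ σ ∈ A.powerset, x ^ σ.card := by
  rw [← Finset.prod_const, Finset.prod_add]
  refine Finset.sum_congr rfl fun τ hτ => ?_
  simp [Finset.prod_const]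

theorem stmt_7 (n : ℕ) (Δ : Finset (Finset (Fin n)))
    (hΔ : ∀ σ ∈ Δ, ∀ τ ⊆ σ, τ ∈ Δ)
    (𝓕 : Finset (Finset (Fin n)))
    (h𝓕 : ∀ F, F ∈ 𝓕 ↔ F ∈ Δ ∧ ∀ G ∈ Δ, F ⊆ G → F = G)
    (t : ℝ) :
    ∑ σ ∈ Δ, t ^ σ.card =
      ∑ S ∈ 𝓕.powerset.filter (fun S => S ≠ ∅),
        (-1 : ℝ) ^ (S.card + 1) * (t + 1) ^ (S.inf id).card := by
  classical
  -- binomial expansion: (x+1)^|A| = ∑_{σ ⊆ A} x^|σ|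
  have hbin : ∀ (x : ℝ) {β : Type} [DecidableEq β] (A : Finset β),
      (x + 1) ^ A.card = ∑ σ ∈ A.powerset, x ^ σ.card :=
    fun x β _ A => aux_binexp x A
  -- every element of Δ is contained in a maximal element
  have hmax : ∀ σ ∈ Δ, ∃ F ∈ 𝓕, σ ⊆ F := by
    intro σ hσ
    obtain ⟨F, hF, hFmax⟩ :=
      (Δ.filter (σ ⊆ ·)).exists_maximal ⟨σ, by simp [hσ]⟩
    rw [Finset.mem_filter] at hF
    refine ⟨F, (h𝓕 F).mpr ⟨hF.1, ?_⟩, hF.2⟩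
    intro G hG hFG
    by_contra hne
    exact hne (le_antisymm hFG
      (hFmax (Finset.mem_filter.mpr ⟨hG, hF.2.trans hFG⟩) hFG))
  have hmem : ∀ σ : Finset (Fin n), σ ∈ Δ ↔ 𝓕.filter (σ ⊆ ·) ≠ ∅ := by
    intro σ
    constructor
    · intro hσ
      obtain ⟨F, hF, hσF⟩ := hmax σ hσ
      exact Finset.ne_empty_of_mem (Finset.mem_filter.mpr ⟨hF, hσF⟩)
    · intro h
      obtain ⟨F, hF⟩ := Finset.nonempty_iff_ne_empty.mpr h
      rw [Finset.mem_filter] at hF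
      exact hΔ F (((h𝓕 F).mp hF.1).1) σ hF.2
  -- rewrite RHS, expand the binomial and swap sums
  rw [show ∑ S ∈ 𝓕.powerset.filter (fun S => S ≠ ∅),
        (-1 : ℝ) ^ (S.card + 1) * (t + 1) ^ (S.inf id).card
      = ∑ S ∈ 𝓕.powerset.filter (fun S => S ≠ ∅),
          ∑ σ ∈ (univ : Finset (Fin n)).powerset,
            (if σ ⊆ S.inf id then (-1 : ℝ) ^ (S.card + 1) * t ^ σ.card
              else 0) from
    Finset.sum_congr rfl fun S _ => by
      rw [hbin, Finset.mul_sum, ← Finset.sum_filter]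
      refine (Finset.sum_congr ?_ fun _ _ => rfl)
      ext σ
      simp [Finset.mem_powerset]]
  rw [Finset.sum_comm]
  -- compute the inner sum for each σ
  have hinner : ∀ σ : Finset (Fin n),
      (∑ S ∈ 𝓕.powerset.filter (fun S => S ≠ ∅),
        (if σ ⊆ S.inf id then (-1 : ℝ) ^ (S.card + 1) * t ^ σ.card else 0))
      = if σ ∈ Δ then t ^ σ.card else 0 := by
    intro σ
    set T : Finset (Finset (Fin n)) := 𝓕.filter (σ ⊆ ·) with hT
    rw [← Finset.sum_filter]
    have hfe : (𝓕.powerset.filter (fun S => S ≠ ∅)).filter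
        (fun S => σ ⊆ S.inf id) = T.powerset.filter (fun S => S ≠ ∅) := by
      ext S
      simp only [Finset.mem_filter, Finset.mem_powerset, hT,
        Finset.le_inf_iff, id]
      constructor
      · rintro ⟨⟨hS𝓕, hSne⟩, hinf⟩
        exact ⟨fun x hx => Finset.mem_filter.mpr
          ⟨hS𝓕 hx, Finset.le_iff_subset.mp (hinf x hx)⟩, hSne⟩
      · rintro ⟨hST, hSne⟩
        exact ⟨⟨fun x hx => (Finset.mem_filter.mp (hST hx)).1, hSne⟩,
          fun x hx => Finset.le_iff_subset.mpr
            (Finset.mem_filter.mp (hST hx)).2⟩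
    rw [hfe]
    -- sum over all of T.powerset
    have htotal : ∑ S ∈ T.powerset, (-1 : ℝ) ^ (S.card + 1) * t ^ σ.card
        = -((0 : ℝ) ^ T.card * t ^ σ.card) := by
      have := hbin (-1) T
      simp only [neg_add_cancel] at this
      rw [← Finset.sum_mul, show (∑ S ∈ T.powerset,
        (-1 : ℝ) ^ (S.card + 1)) = - ∑ S ∈ T.powerset, (-1 : ℝ) ^ S.card by
          rw [← Finset.sum_neg_distrib]
          exact Finset.sum_congr rfl fun S _ => by ring, ← this]
      ring
    have hsplit : (∑ S ∈ T.powerset.filter (fun S => S ≠ ∅),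
          (-1 : ℝ) ^ (S.card + 1) * t ^ σ.card)
        = (∑ S ∈ T.powerset, (-1 : ℝ) ^ (S.card + 1) * t ^ σ.card)
          + t ^ σ.card := by
      have h2 : T.powerset.filter (fun S => ¬ S ≠ ∅) = {∅} := by
        ext S
        simp only [Finset.mem_filter, Finset.mem_powerset, not_not,
          Finset.mem_singleton]
        exact ⟨fun h => h.2, fun h => ⟨h ▸ Finset.empty_subset T, h⟩⟩
      rw [← Finset.sum_filter_add_sum_filter_not T.powerset
        (fun S => S ≠ ∅) (fun S => (-1 : ℝ) ^ (S.card + 1) * t ^ σ.card), h2]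
      simp
    rw [hsplit, htotal]
    by_cases hσΔ : σ ∈ Δ
    · have : T ≠ ∅ := (hmem σ).mp hσΔ
      have : T.card ≠ 0 := fun h => this (Finset.card_eq_zero.mp h)
      simp [hσΔ, zero_pow this]
    · have : T = ∅ := by
        by_contra h
        exact hσΔ ((hmem σ).mpr h)
      simp [hσΔ, this]
  rw [Finset.sum_congr rfl fun σ _ => hinner σ, ← Finset.sum_filter]
  refine (Finset.sum_congr ?_ fun _ _ => rfl).symm
  ext σ
  simp only [Finset.mem_filter, Finset.mem_powerset]
  exact ⟨fun h => h.2, fun h => ⟨Finset.subset_univ σ, h⟩⟩
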